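/- arXiv:1706.04477 — 3 statements merged into one kernel-verified Lean document; each statement's English description precedes it below -/
import Mathlib

section
/- For any bound quiver algebra A = KQ/I over a field K, and for any relation μ = Σ_r c_r μ_r lying in the ideal I (where each μ_r is a path in Q of length ≥ 2 from a common source to a common target), the element π(μ) = Σ_r c_r π(μ_r) lies in the kernel of the bimodule homomorphism d_1 : P_1 → P_0. Here P_0 = ⊕_{i∈Q_0} Ae_i ⊗ e_iA, P_1 = ⊕_{α∈Q_1} Ae_{s(α)} ⊗ e_{t(α)}A, d_1(e_{s(α)} ⊗ e_{t(α)}) = α ⊗ e_{t(α)} − e_{s(α)} ⊗ α, and π(α_1α_2⋯α_m) = Σ_{k=1}^m α_1⋯α_{k−1} ⊗ α_{k+1}⋯α_m (with α_0 = e_{s(α_1)}, α_{m+1} = e_{t(α_m)}). -/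
open scoped TensorProduct

namespace BoundQuiver

variable (K : Type) [Field K] (A : Type) [Ring A] [Algebra K A]
variable {Q0 Q1 : Type}

/-- Product in `A` of the images of the arrows of a path (read left to right). -/
def prodA (av : Q1 → A) (l : List Q1) : A := (l.map av).prod

/-- `IsPath s t i j l`: the list of arrows `l` is a composable path from vertex `i`
to vertex `j` in the quiver with source and target maps `s`, `t`. -/
def IsPath (s t : Q1 → Q0) (i j : Q0) (l : List Q1) : Prop :=
  l ≠ [] ∧ l.Chain' (fun x y => t x = s y) ∧
    (∀ h : l ≠ [], s (l.head h) = i ∧ t (l.getLast h) = j)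

variable [DecidableEq Q1]

/-- The map `π` on paths: `π(α₁⋯α_m) = Σ_k α₁⋯α_{k−1} ⊗ α_{k+1}⋯α_m`
(with `α₀ = e_{s(α₁)}`, `α_{m+1} = e_{t(α_m)}`), viewed as an element of
`P₁ = ⊕_{α ∈ Q₁} Ae_{s(α)} ⊗ e_{t(α)}A`, modelled as a `Q1`-indexed family in
`A ⊗[K] A`. -/
noncomputable def piP (s t : Q1 → Q0) (ev : Q0 → A) (av : Q1 → A) : List Q1 → Q1 → A ⊗[K] A
  | [], _ => 0
  | x :: l, b =>
      (if b = x then ev (s x) ⊗ₜ[K] (ev (t x) * prodA A av l) else 0) +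
        TensorProduct.map (LinearMap.mulLeft K (av x)) LinearMap.id
          (piP s t ev av l b)

variable [DecidableEq Q0] [Fintype Q1]

/-- The differential `d₁ : P₁ → P₀`, determined on the generator
`e_{s(α)} ⊗ e_{t(α)}` of the summand of `P₁` indexed by the arrow `α` by
`d₁(e_{s(α)} ⊗ e_{t(α)}) = α ⊗ e_{t(α)} − e_{s(α)} ⊗ α`; here
`P₀ = ⊕_{i ∈ Q0} Ae_i ⊗ e_iA` is modelled as a `Q0`-indexed family in `A ⊗[K] A`. -/
noncomputable def d1 (s t : Q1 → Q0) (av : Q1 → A) (p : Q1 → A ⊗[K] A) : Q0 → A ⊗[K] A :=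
  fun i =>
    (∑ α : Q1, if t α = i then
        TensorProduct.map (LinearMap.mulRight K (av α)) LinearMap.id (p α) else 0) -
    (∑ α : Q1, if s α = i then
        TensorProduct.map LinearMap.id (LinearMap.mulLeft K (av α)) (p α) else 0)

end BoundQuiver

namespace BQAux

open BoundQuiver

variable (K : Type) [Field K] (A : Type) [Ring A] [Algebra K A]
variable {Q0 Q1 : Type} [DecidableEq Q0] [DecidableEq Q1] [Fintype Q1]
variable (s t : Q1 → Q0) (ev : Q0 → A) (av : Q1 → A)

lemma prodA_cons (x : Q1) (l : List Q1) :
    prodA A av (x :: l) = av x * prodA A av l := by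
  simp [prodA]

lemma ite_add_zero' {M : Type*} [AddCommMonoid M] (P : Prop) [Decidable P] (a b : M) :
    (if P then a + b else 0) = (if P then a else 0) + (if P then b else 0) := by
  split <;> simp

lemma d1_add (p q : Q1 → A ⊗[K] A) (v : Q0) :
    d1 K A s t av (fun b => p b + q b) v = d1 K A s t av p v + d1 K A s t av q v := by
  simp only [d1, map_add, ite_add_zero', Finset.sum_add_distrib]
  abel

lemma d1_smul (c : K) (p : Q1 → A ⊗[K] A) (v : Q0) :
    d1 K A s t av (fun b => c • p b) v = c • d1 K A s t av p v := by
  have h : ∀ (P : Prop) [Decidable P] (a : A ⊗[K] A),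
      (if P then c • a else 0) = c • (if P then a else 0) := by
    intro P _ a; split <;> simp
  simp only [d1, map_smul, h, ← Finset.smul_sum, smul_sub]

lemma d1_zero (v : Q0) : d1 K A s t av (fun _ => (0 : A ⊗[K] A)) v = 0 := by
  simp [d1]

lemma d1_sum {ι : Type*} (F : Finset ι) (q : ι → Q1 → A ⊗[K] A) (v : Q0) :
    d1 K A s t av (fun b => ∑ r ∈ F, q r b) v = ∑ r ∈ F, d1 K A s t av (q r) v := by
  classical
  induction F using Finset.induction with
  | empty => simpa using d1_zero K A s t av v
  | insert _ _ hx ih =>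
      rw [Finset.sum_insert hx]
      simp only [Finset.sum_insert hx] at *
      rw [← ih]
      exact d1_add K A s t av _ _ v

lemma d1_single (x : Q1) (X : A ⊗[K] A) (v : Q0) :
    d1 K A s t av (fun b => if b = x then X else 0) v =
      (if t x = v then
        TensorProduct.map (LinearMap.mulRight K (av x)) LinearMap.id X else 0) -
      (if s x = v then
        TensorProduct.map LinearMap.id (LinearMap.mulLeft K (av x)) X else 0) := by
  have h1 : ∀ (f : Q1 → Q0) (g : Q1 → (A ⊗[K] A) →ₗ[K] (A ⊗[K] A)),
      (∑ α : Q1, if f α = v then g α (if α = x then X else 0) else 0) =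
        (if f x = v then g x X else 0) := by
    intro f g
    have h2 : ∀ α : Q1, (if f α = v then g α (if α = x then X else 0) else 0) =
        (if α = x then (if f x = v then g x X else 0) else 0) := by
      intro α
      by_cases h : α = x
      · subst h; split <;> simp
      · simp [h]
    rw [Finset.sum_congr rfl fun α _ => h2 α, Finset.sum_ite_eq' Finset.univ x]
    simp
  simp only [d1, h1]

lemma d1_mapL (c : A) (p : Q1 → A ⊗[K] A) (v : Q0) :
    d1 K A s t av
        (fun b => TensorProduct.map (LinearMap.mulLeft K c) LinearMap.id (p b)) v =
      TensorProduct.map (LinearMap.mulLeft K c) LinearMap.id (d1 K A s t av p v) := by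
  have key : ∀ a : A,
      (TensorProduct.map (LinearMap.mulRight K a) (LinearMap.id : A →ₗ[K] A)).comp
          (TensorProduct.map (LinearMap.mulLeft K c) (LinearMap.id : A →ₗ[K] A)) =
        (TensorProduct.map (LinearMap.mulLeft K c) (LinearMap.id : A →ₗ[K] A)).comp
          (TensorProduct.map (LinearMap.mulRight K a) (LinearMap.id : A →ₗ[K] A)) := by
    intro a
    have hcomm : LinearMap.mulRight K a ∘ₗ LinearMap.mulLeft K c =
        LinearMap.mulLeft K c ∘ₗ LinearMap.mulRight K a :=
      LinearMap.ext fun z => by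
        simp only [LinearMap.comp_apply, LinearMap.mulRight_apply,
          LinearMap.mulLeft_apply, mul_assoc]
    rw [← TensorProduct.map_comp, ← TensorProduct.map_comp, hcomm]
  have key2 : ∀ a : A,
      (TensorProduct.map (LinearMap.id : A →ₗ[K] A) (LinearMap.mulLeft K a)).comp
          (TensorProduct.map (LinearMap.mulLeft K c) (LinearMap.id : A →ₗ[K] A)) =
        (TensorProduct.map (LinearMap.mulLeft K c) (LinearMap.id : A →ₗ[K] A)).comp
          (TensorProduct.map (LinearMap.id : A →ₗ[K] A) (LinearMap.mulLeft K a)) := by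
    intro a
    rw [← TensorProduct.map_comp, ← TensorProduct.map_comp]
    simp only [LinearMap.id_comp, LinearMap.comp_id]
  have hite : ∀ (P : Prop) [Decidable P] (a : A ⊗[K] A),
      (if P then TensorProduct.map (LinearMap.mulLeft K c) LinearMap.id a else 0) =
        TensorProduct.map (LinearMap.mulLeft K c) LinearMap.id
          (if P then a else 0) := by
    intro P _ a; split <;> simp
  simp only [d1, map_sub, map_sum]
  congr 1 <;> refine Finset.sum_congr rfl fun α _ => ?_
  · rw [← hite]
    congr 1
    exact DFunLike.congr_fun (key (av α)) (p α)
  · rw [← hite]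
    congr 1
    exact DFunLike.congr_fun (key2 (av α)) (p α)

variable (hidem : ∀ i j : Q0, ev i * ev j = if i = j then ev i else 0)
variable (harr : ∀ α : Q1, ev (s α) * av α * ev (t α) = av α)

include hidem harr in
lemma absL (α : Q1) : ev (s α) * av α = av α := by
  conv_lhs => rw [← harr α]
  rw [← mul_assoc, ← mul_assoc, hidem]
  simp [harr α, mul_assoc]

include hidem harr in
lemma absR (α : Q1) : av α * ev (t α) = av α := by
  conv_lhs => rw [← harr α]
  rw [mul_assoc, mul_assoc, hidem]
  simp [← mul_assoc, harr α]

include hidem harr in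
lemma d1_piP :
    ∀ (l : List Q1) (x : Q1), (x :: l).Chain' (fun a b => t a = s b) → ∀ v : Q0,
      d1 K A s t av (piP K A s t ev av (x :: l)) v =
        (if t ((x :: l).getLast (List.cons_ne_nil x l)) = v then
          prodA A av (x :: l) ⊗ₜ[K]
            ev (t ((x :: l).getLast (List.cons_ne_nil x l))) else 0) -
        (if s x = v then ev (s x) ⊗ₜ[K] prodA A av (x :: l) else 0) := by
  intro l
  induction l with
  | nil =>
      intro x _ v
      have hp : piP K A s t ev av [x] =
          fun b => (if b = x then ev (s x) ⊗ₜ[K] (ev (t x) * prodA A av []) else 0) +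
            TensorProduct.map (LinearMap.mulLeft K (av x)) LinearMap.id 0 := rfl
      rw [hp]
      simp only [map_zero, add_zero]
      rw [d1_single]
      simp [prodA, absL A s t ev av hidem harr x, absR A s t ev av hidem harr x,
        mul_assoc]
  | cons y l ih =>
      intro x hchain v
      have hxy : t x = s y := hchain.rel_head
      have hchain' : (y :: l).Chain' (fun a b => t a = s b) := hchain.tail
      have hp : piP K A s t ev av (x :: y :: l) =
          fun b =>
            (if b = x then ev (s x) ⊗ₜ[K] (ev (t x) * prodA A av (y :: l)) else 0) +
            TensorProduct.map (LinearMap.mulLeft K (av x)) LinearMap.id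
              (piP K A s t ev av (y :: l) b) := rfl
      rw [hp, d1_add, d1_single, d1_mapL, ih y hchain' v]
      have habs : ev (t x) * prodA A av (y :: l) = prodA A av (y :: l) := by
        rw [hxy, prodA_cons, ← mul_assoc, absL A s t ev av hidem harr y]
      have hlast : (x :: y :: l).getLast (List.cons_ne_nil x (y :: l)) =
          (y :: l).getLast (List.cons_ne_nil y l) := by
        simp [List.getLast]
      rw [habs]
      simp only [map_sub, hlast]
      have hmapite : ∀ (P : Prop) [Decidable P] (u w : A),
          TensorProduct.map (LinearMap.mulLeft K (av x)) LinearMap.id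
              (if P then u ⊗ₜ[K] w else 0) =
            (if P then (av x * u) ⊗ₜ[K] w else 0) := by
        intro P _ u w; split <;> simp
      have hmapite2 : ∀ (P : Prop) [Decidable P] (u w : A),
          TensorProduct.map LinearMap.id (LinearMap.mulLeft K (av x))
              (if P then u ⊗ₜ[K] w else 0) =
            (if P then u ⊗ₜ[K] (av x * w) else 0) := by
        intro P _ u w; split <;> simp
      have hmapite3 : ∀ (P : Prop) [Decidable P] (u w : A),
          TensorProduct.map (LinearMap.mulRight K (av x)) LinearMap.id
              (if P then u ⊗ₜ[K] w else 0) =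
            (if P then (u * av x) ⊗ₜ[K] w else 0) := by
        intro P _ u w; split <;> simp
      rw [hmapite, hmapite]
      simp only [TensorProduct.map_tmul, LinearMap.mulRight_apply,
        LinearMap.mulLeft_apply, LinearMap.id_coe, id_eq]
      have e1 : ev (s x) * av x = av x := absL A s t ev av hidem harr x
      have e2 : av x * ev (s y) = av x := by
        rw [← hxy]; exact absR A s t ev av hidem harr x
      rw [prodA_cons A av x (y :: l), e1, e2]
      simp only [hxy]
      abel

end BQAux

open BoundQuiver in
/-- For a bound quiver algebra `A = KQ/I` (given by orthogonal idempotents `ev i`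
summing to `1` and arrow images `av α` with `e_{s(α)}·α·e_{t(α)} = α`), and for any
relation `μ = Σ_r c_r μ_r` lying in `I` (the `μ_r` being paths of length `≥ 2` from a
common source `i₀` to a common target `j₀`, and `μ` having image `0` in `A`), the
element `π(μ) = Σ_r c_r π(μ_r)` lies in the kernel of `d₁ : P₁ → P₀`. -/
theorem d1_pi_relation_eq_zero (K : Type) [Field K] (A : Type) [Ring A] [Algebra K A]
    {Q0 Q1 : Type} [DecidableEq Q0] [DecidableEq Q1] [Fintype Q0] [Fintype Q1]
    (s t : Q1 → Q0) (ev : Q0 → A) (av : Q1 → A)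
    (hidem : ∀ i j : Q0, ev i * ev j = if i = j then ev i else 0)
    (hsum : ∑ i : Q0, ev i = 1)
    (harr : ∀ α : Q1, ev (s α) * av α * ev (t α) = av α)
    (n : ℕ) (c : Fin n → K) (p : Fin n → List Q1) (i₀ j₀ : Q0)
    (hpath : ∀ r, IsPath s t i₀ j₀ (p r) ∧ 2 ≤ (p r).length)
    (hrel : ∑ r, c r • prodA A av (p r) = 0) :
    ∀ v : Q0,
      d1 K A s t av (fun b => ∑ r, c r • piP K A s t ev av (p r) b) v = 0 := by
  intro v
  have hstep : ∀ r : Fin n,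
      d1 K A s t av (piP K A s t ev av (p r)) v =
        (if j₀ = v then prodA A av (p r) ⊗ₜ[K] ev j₀ else 0) -
        (if i₀ = v then ev i₀ ⊗ₜ[K] prodA A av (p r) else 0) := by
    intro r
    obtain ⟨⟨hne, hchain, hends⟩, _⟩ := hpath r
    obtain ⟨x, l, hxl⟩ := List.exists_cons_of_ne_nil hne
    have hh : (p r).head hne = x := by simp [hxl]
    have hhead : s x = i₀ := by rw [← hh]; exact (hends hne).1
    have hl : (p r).getLast hne = (x :: l).getLast (List.cons_ne_nil x l) := by
      simp only [hxl]
    have hlastj : t ((x :: l).getLast (List.cons_ne_nil x l)) = j₀ := by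
      rw [← hl]; exact (hends hne).2
    rw [hxl] at hchain
    rw [hxl, BQAux.d1_piP K A s t ev av hidem harr l x hchain v, hlastj, hhead]
  calc d1 K A s t av (fun b => ∑ r, c r • piP K A s t ev av (p r) b) v
      = ∑ r, c r • d1 K A s t av (piP K A s t ev av (p r)) v := by
        rw [BQAux.d1_sum K A s t av Finset.univ
          (fun r b => c r • piP K A s t ev av (p r) b) v]
        exact Finset.sum_congr rfl fun r _ =>
          BQAux.d1_smul K A s t av (c r) (piP K A s t ev av (p r)) v
    _ = 0 := by
        simp only [hstep, smul_sub]
        rw [Finset.sum_sub_distrib]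
        have h1 : ∀ r : Fin n, c r • (if j₀ = v then prodA A av (p r) ⊗ₜ[K] ev j₀ else 0) =
            (if j₀ = v then (c r • prodA A av (p r)) ⊗ₜ[K] ev j₀ else 0) := by
          intro r; split <;> simp [TensorProduct.smul_tmul']
        have h2 : ∀ r : Fin n, c r • (if i₀ = v then ev i₀ ⊗ₜ[K] prodA A av (p r) else 0) =
            (if i₀ = v then ev i₀ ⊗ₜ[K] (c r • prodA A av (p r)) else 0) := by
          intro r; split <;> simp [TensorProduct.tmul_smul]
        simp only [h1, h2]
        rw [Finset.sum_ite_irrel, Finset.sum_ite_irrel]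
        rw [← TensorProduct.sum_tmul, ← TensorProduct.tmul_sum, hrel]
        simp
end

section
/- Let Λ = Λ(m,λ) be a higher tetrahedral algebra. The assignment on vertices given by the permutation (5 4 2)(1 6 3) and on arrows by (δ ω σ)(η β ε)(γ ρ ξ)(ν μ α) extends to a K-algebra automorphism φ of Λ of order 3. -/
open scoped TensorProduct

namespace HigherTetrahedral

/-- The twelve arrows of the tetrahedral triangulation quiver. -/
inductive Arr : Type
  | nu | de | ep | rh | si | al | ga | be | xi | et | om | mu
  deriving DecidableEq

open Arr

instance : Fintype Arr where
  elems := {nu, de, ep, rh, si, al, ga, be, xi, et, om, mu}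
  complete := fun x => by cases x <;> decide

/-- Source vertex of each arrow (vertex `v` is `⟨v-1⟩ : Fin 6`). -/
def src : Arr → Fin 6
  | nu => 0 | de => 0 | ep => 1 | rh => 1 | si => 2 | al => 2
  | ga => 3 | be => 3 | xi => 4 | et => 4 | om => 5 | mu => 5

/-- Target vertex of each arrow. -/
def tgt : Arr → Fin 6
  | nu => 5 | de => 4 | ep => 4 | rh => 5 | si => 1 | al => 0
  | ga => 0 | be => 1 | xi => 2 | et => 3 | om => 3 | mu => 2

/-- The permutation `f` of arrows, with orbits (δ η γ), (ε ξ σ), (ρ ω β), (ν μ α). -/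
def f : Arr → Arr
  | de => et | et => ga | ga => de
  | ep => xi | xi => si | si => ep
  | rh => om | om => be | be => rh
  | nu => mu | mu => al | al => nu

/-- The permutation `g`: `g θ` is the arrow starting at `tgt θ` other than `f θ`. -/
def g : Arr → Arr
  | de => xi | et => be | ga => nu
  | ep => et | xi => al | si => rh
  | rh => mu | om => ga | be => ep
  | nu => om | mu => si | al => de

variable (K : Type) [Field K]

/-- The ambient free algebra on the vertices and arrows. -/
abbrev FreeTet := FreeAlgebra K ((Fin 6) ⊕ Arr)

/-- Generator corresponding to a vertex. -/
def V (i : Fin 6) : FreeTet K := FreeAlgebra.ι K (Sum.inl i)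

/-- Generator corresponding to an arrow. -/
def A (θ : Arr) : FreeTet K := FreeAlgebra.ι K (Sum.inr θ)

variable (m : ℕ) (lam : K)

/-- The defining relations of the higher tetrahedral algebra `Λ(m,λ)`, together with
the path-algebra relations for the vertex idempotents. -/
inductive TetRel : FreeTet K → FreeTet K → Prop
  | idem (i j : Fin 6) : TetRel (V K i * V K j) (if i = j then V K i else 0)
  | sum_one : TetRel (∑ i : Fin 6, V K i) 1
  | src_tgt (θ : Arr) : TetRel (V K (src θ) * A K θ * V K (tgt θ)) (A K θ)
  | rel_ga : TetRel (A K ga * A K de)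
      (A K be * A K ep + lam • ((A K be * A K rh * A K om) ^ (m - 1) * (A K be * A K ep)))
  | rel_rh : TetRel (A K rh * A K om)
      (A K ep * A K et + lam • ((A K ep * A K xi * A K si) ^ (m - 1) * (A K ep * A K et)))
  | rel_xi : TetRel (A K xi * A K si)
      (A K et * A K be + lam • ((A K et * A K ga * A K de) ^ (m - 1) * (A K et * A K be)))
  | rel_de : TetRel (A K de * A K et) (A K nu * A K om)
  | rel_om : TetRel (A K om * A K be) (A K mu * A K si)
  | rel_si : TetRel (A K si * A K ep) (A K al * A K de)
  | rel_et : TetRel (A K et * A K ga) (A K xi * A K al)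
  | rel_be : TetRel (A K be * A K rh) (A K ga * A K nu)
  | rel_ep : TetRel (A K ep * A K xi) (A K rh * A K mu)
  | rel_nu : TetRel (A K nu * A K mu) (A K de * A K xi)
  | rel_mu : TetRel (A K mu * A K al) (A K om * A K ga)
  | rel_al : TetRel (A K al * A K nu) (A K si * A K rh)
  | zero_rel (θ : Arr) : TetRel
      ((A K θ * A K (f θ) * A K (f (f θ))) ^ (m - 1) * (A K θ * A K (f θ)) * A K (g (f θ))) 0

/-- The higher tetrahedral algebra `Λ(m,λ)`. -/
abbrev Tet := RingQuot (TetRel K m lam)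

/-- The idempotent of `Λ(m,λ)` at a vertex. -/
def e (i : Fin 6) : Tet K m lam := RingQuot.mkAlgHom K (TetRel K m lam) (V K i)

/-- The image in `Λ(m,λ)` of an arrow. -/
def a (θ : Arr) : Tet K m lam := RingQuot.mkAlgHom K (TetRel K m lam) (A K θ)

/-- The elements `X_i` (vertex `i+1` in the paper's numbering):
`X₁ = δηγ`, `X₂ = ρωβ`, `X₃ = ανμ`, `X₄ = γδη`, `X₅ = ηγδ`, `X₆ = ωβρ`. -/
def X : Fin 6 → Tet K m lam
  | 0 => a K m lam de * a K m lam et * a K m lam ga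
  | 1 => a K m lam rh * a K m lam om * a K m lam be
  | 2 => a K m lam al * a K m lam nu * a K m lam mu
  | 3 => a K m lam ga * a K m lam de * a K m lam et
  | 4 => a K m lam et * a K m lam ga * a K m lam de
  | 5 => a K m lam om * a K m lam be * a K m lam rh

/-- Product in `Λ(m,λ)` of a list of arrows (a path, read left to right). -/
def pathProd (l : List Arr) : Tet K m lam := (l.map (a K m lam)).prod

/-- `IsPath i j l` : the list of arrows `l` is a (composable) path from vertex `i`
to vertex `j`. -/
def IsPath (i j : Fin 6) (l : List Arr) : Prop :=
  l ≠ [] ∧ l.Chain' (fun x y => tgt x = src y) ∧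
    (∀ h : l ≠ [], src (l.head h) = i ∧ tgt (l.getLast h) = j)

end HigherTetrahedral


namespace HigherTetrahedral

/-- The vertex permutation `(5 4 2)(1 6 3)` (vertex `v` is `⟨v-1⟩ : Fin 6`). -/
def vperm : Fin 6 → Fin 6
  | 0 => 5 | 1 => 4 | 2 => 0 | 3 => 1 | 4 => 3 | 5 => 2

open Arr in
/-- The arrow permutation `(δ ω σ)(η β ε)(γ ρ ξ)(ν μ α)`. -/
def aperm : Arr → Arr
  | de => om | om => si | si => de
  | et => be | be => ep | ep => et
  | ga => rh | rh => xi | xi => ga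
  | nu => mu | mu => al | al => nu

end HigherTetrahedral


namespace HigherTetrahedral
open Arr

variable (K : Type) [Field K] (m : ℕ) (lam : K)

lemma vperm_inj : Function.Injective vperm := by decide

lemma vperm3 : ∀ i, vperm (vperm (vperm i)) = i := by decide

lemma aperm3 : ∀ θ, aperm (aperm (aperm θ)) = θ := by decide

lemma src_aperm : ∀ θ, src (aperm θ) = vperm (src θ) := by decide

lemma tgt_aperm : ∀ θ, tgt (aperm θ) = vperm (tgt θ) := by decide

lemma aperm_f : ∀ θ, aperm (f θ) = f (aperm θ) := by decide

lemma aperm_g : ∀ θ, aperm (g θ) = g (aperm θ) := by decide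

/-- Generator assignment for the automorphism. -/
noncomputable def phiGen : (Fin 6) ⊕ Arr → Tet K m lam
  | .inl i => e K m lam (vperm i)
  | .inr θ => a K m lam (aperm θ)

noncomputable def Hphi : FreeTet K →ₐ[K] Tet K m lam :=
  FreeAlgebra.lift K (phiGen K m lam)

lemma Hphi_rel : ∀ ⦃x y : FreeTet K⦄, TetRel K m lam x y →
    Hphi K m lam x = Hphi K m lam y := by
  intro x y h
  cases h
  case idem i j =>
    have h2 := RingQuot.mkAlgHom_rel K (TetRel.idem (K := K) (m := m) (lam := lam)
      (vperm i) (vperm j))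
    by_cases hij : i = j
    · subst hij
      rw [if_pos rfl] at h2
      simpa only [Hphi, map_mul, map_zero, V, e, FreeAlgebra.lift_ι_apply, phiGen,
        eq_self_iff_true, if_true] using h2
    · rw [if_neg (fun hc => hij (vperm_inj hc))] at h2
      simpa only [Hphi, map_mul, map_zero, V, e, FreeAlgebra.lift_ι_apply, phiGen,
        if_neg hij] using h2
  case sum_one =>
    have h2 := RingQuot.mkAlgHom_rel K (TetRel.sum_one (K := K) (m := m) (lam := lam))
    simp only [map_sum, map_one, Fin.sum_univ_six] at h2 ⊢
    simp only [Hphi, map_add, map_one, V, e, FreeAlgebra.lift_ι_apply, phiGen]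
    have h0 : vperm 0 = 5 := by decide
    have h1 : vperm 1 = 4 := by decide
    have h2' : vperm 2 = 0 := by decide
    have h3 : vperm 3 = 1 := by decide
    have h4 : vperm 4 = 3 := by decide
    have h5 : vperm 5 = 2 := by decide
    rw [h0, h1, h2', h3, h4, h5]
    simp only [map_add, V] at h2
    rw [← h2]
    abel
  case src_tgt θ =>
    have h2 := RingQuot.mkAlgHom_rel K (TetRel.src_tgt (K := K) (m := m) (lam := lam)
      (aperm θ))
    rw [src_aperm, tgt_aperm] at h2
    simpa only [Hphi, map_mul, V, A, e, a, FreeAlgebra.lift_ι_apply, phiGen] using h2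
  case zero_rel θ =>
    have h2 := RingQuot.mkAlgHom_rel K (TetRel.zero_rel (K := K) (m := m) (lam := lam)
      (aperm θ))
    rw [← aperm_f θ, ← aperm_f (f θ), ← aperm_g (f θ)] at h2
    simpa only [Hphi, map_mul, map_pow, map_zero, A, a, FreeAlgebra.lift_ι_apply,
      phiGen] using h2
  case rel_ga =>
    have h2 := RingQuot.mkAlgHom_rel K (TetRel.rel_rh (K := K) (m := m) (lam := lam))
    simpa only [Hphi, map_mul, map_add, map_smul, map_pow, map_zero, map_one, V, A, e, a,
      FreeAlgebra.lift_ι_apply, phiGen, vperm, aperm] using h2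
  case rel_rh =>
    have h2 := RingQuot.mkAlgHom_rel K (TetRel.rel_xi (K := K) (m := m) (lam := lam))
    simpa only [Hphi, map_mul, map_add, map_smul, map_pow, map_zero, map_one, V, A, e, a,
      FreeAlgebra.lift_ι_apply, phiGen, vperm, aperm] using h2
  case rel_xi =>
    have h2 := RingQuot.mkAlgHom_rel K (TetRel.rel_ga (K := K) (m := m) (lam := lam))
    simpa only [Hphi, map_mul, map_add, map_smul, map_pow, map_zero, map_one, V, A, e, a,
      FreeAlgebra.lift_ι_apply, phiGen, vperm, aperm] using h2
  case rel_de =>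
    have h2 := RingQuot.mkAlgHom_rel K (TetRel.rel_om (K := K) (m := m) (lam := lam))
    simpa only [Hphi, map_mul, map_add, map_smul, map_pow, map_zero, map_one, V, A, e, a,
      FreeAlgebra.lift_ι_apply, phiGen, vperm, aperm] using h2
  case rel_om =>
    have h2 := RingQuot.mkAlgHom_rel K (TetRel.rel_si (K := K) (m := m) (lam := lam))
    simpa only [Hphi, map_mul, map_add, map_smul, map_pow, map_zero, map_one, V, A, e, a,
      FreeAlgebra.lift_ι_apply, phiGen, vperm, aperm] using h2
  case rel_si =>
    have h2 := RingQuot.mkAlgHom_rel K (TetRel.rel_de (K := K) (m := m) (lam := lam))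
    simpa only [Hphi, map_mul, map_add, map_smul, map_pow, map_zero, map_one, V, A, e, a,
      FreeAlgebra.lift_ι_apply, phiGen, vperm, aperm] using h2
  case rel_et =>
    have h2 := RingQuot.mkAlgHom_rel K (TetRel.rel_be (K := K) (m := m) (lam := lam))
    simpa only [Hphi, map_mul, map_add, map_smul, map_pow, map_zero, map_one, V, A, e, a,
      FreeAlgebra.lift_ι_apply, phiGen, vperm, aperm] using h2
  case rel_be =>
    have h2 := RingQuot.mkAlgHom_rel K (TetRel.rel_ep (K := K) (m := m) (lam := lam))
    simpa only [Hphi, map_mul, map_add, map_smul, map_pow, map_zero, map_one, V, A, e, a,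
      FreeAlgebra.lift_ι_apply, phiGen, vperm, aperm] using h2
  case rel_ep =>
    have h2 := RingQuot.mkAlgHom_rel K (TetRel.rel_et (K := K) (m := m) (lam := lam))
    simpa only [Hphi, map_mul, map_add, map_smul, map_pow, map_zero, map_one, V, A, e, a,
      FreeAlgebra.lift_ι_apply, phiGen, vperm, aperm] using h2
  case rel_nu =>
    have h2 := RingQuot.mkAlgHom_rel K (TetRel.rel_mu (K := K) (m := m) (lam := lam))
    simpa only [Hphi, map_mul, map_add, map_smul, map_pow, map_zero, map_one, V, A, e, a,
      FreeAlgebra.lift_ι_apply, phiGen, vperm, aperm] using h2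
  case rel_mu =>
    have h2 := RingQuot.mkAlgHom_rel K (TetRel.rel_al (K := K) (m := m) (lam := lam))
    simpa only [Hphi, map_mul, map_add, map_smul, map_pow, map_zero, map_one, V, A, e, a,
      FreeAlgebra.lift_ι_apply, phiGen, vperm, aperm] using h2
  case rel_al =>
    have h2 := RingQuot.mkAlgHom_rel K (TetRel.rel_nu (K := K) (m := m) (lam := lam))
    simpa only [Hphi, map_mul, map_add, map_smul, map_pow, map_zero, map_one, V, A, e, a,
      FreeAlgebra.lift_ι_apply, phiGen, vperm, aperm] using h2

/-- The algebra endomorphism. -/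
noncomputable def phiA : Tet K m lam →ₐ[K] Tet K m lam :=
  RingQuot.liftAlgHom K ⟨Hphi K m lam, Hphi_rel K m lam⟩

lemma phiA_e (i : Fin 6) : phiA K m lam (e K m lam i) = e K m lam (vperm i) := by
  show RingQuot.liftAlgHom K ⟨Hphi K m lam, Hphi_rel K m lam⟩
    (RingQuot.mkAlgHom K (TetRel K m lam) (V K i)) = _
  rw [RingQuot.liftAlgHom_mkAlgHom_apply]
  simp [Hphi, V, FreeAlgebra.lift_ι_apply, phiGen]

lemma phiA_a (θ : Arr) : phiA K m lam (a K m lam θ) = a K m lam (aperm θ) := by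
  show RingQuot.liftAlgHom K ⟨Hphi K m lam, Hphi_rel K m lam⟩
    (RingQuot.mkAlgHom K (TetRel K m lam) (A K θ)) = _
  rw [RingQuot.liftAlgHom_mkAlgHom_apply]
  simp [Hphi, A, FreeAlgebra.lift_ι_apply, phiGen]

lemma phiA_cube :
    (phiA K m lam).comp ((phiA K m lam).comp (phiA K m lam)) = AlgHom.id K (Tet K m lam) := by
  apply RingQuot.ringQuot_ext'
  apply FreeAlgebra.hom_ext
  funext s
  cases s with
  | inl i =>
    have he : RingQuot.mkAlgHom K (TetRel K m lam) (FreeAlgebra.ι K (Sum.inl i))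
        = e K m lam i := rfl
    simp only [Function.comp_apply, AlgHom.coe_comp, AlgHom.id_apply, he,
      phiA_e, vperm3]
  | inr θ =>
    have ha : RingQuot.mkAlgHom K (TetRel K m lam) (FreeAlgebra.ι K (Sum.inr θ))
        = a K m lam θ := rfl
    simp only [Function.comp_apply, AlgHom.coe_comp, AlgHom.id_apply, ha,
      phiA_a, aperm3]

/-- Generator assignment for the "semisimple quotient" map used to separate idempotents. -/
noncomputable def psiGen : (Fin 6) ⊕ Arr → (Fin 6 → K)
  | .inl i => Pi.single i 1
  | .inr _ => 0

noncomputable def Hpsi : FreeTet K →ₐ[K] (Fin 6 → K) :=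
  FreeAlgebra.lift K (psiGen K)

lemma Hpsi_rel : ∀ ⦃x y : FreeTet K⦄, TetRel K m lam x y → Hpsi K x = Hpsi K y := by
  intro x y h
  cases h
  case idem i j =>
    by_cases hij : i = j
    · subst hij
      rw [if_pos rfl]
      simp only [Hpsi, map_mul, V, FreeAlgebra.lift_ι_apply, psiGen]
      funext k
      by_cases hk : k = i <;> simp [Pi.single_apply, hk]
    · rw [if_neg hij]
      simp only [Hpsi, map_mul, map_zero, V, FreeAlgebra.lift_ι_apply, psiGen]
      funext k
      by_cases hk : k = i
      · subst hk
        simp [Pi.single_apply, Ne.symm hij]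
      · simp [Pi.single_apply, hk]
  case sum_one =>
    simp only [Hpsi, map_sum, map_one, V, FreeAlgebra.lift_ι_apply, psiGen]
    have := Finset.univ_sum_single (1 : Fin 6 → K)
    simpa using this
  all_goals
    simp only [Hpsi, map_mul, map_add, map_smul, map_pow, map_zero, map_one, V, A,
      FreeAlgebra.lift_ι_apply, psiGen, mul_zero, zero_mul, smul_zero, add_zero, zero_add]

noncomputable def psiA : Tet K m lam →ₐ[K] (Fin 6 → K) :=
  RingQuot.liftAlgHom K ⟨Hpsi K, Hpsi_rel K m lam⟩

lemma psiA_e (i : Fin 6) : psiA K m lam (e K m lam i) = Pi.single i 1 := by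
  show RingQuot.liftAlgHom K ⟨Hpsi K, Hpsi_rel K m lam⟩
    (RingQuot.mkAlgHom K (TetRel K m lam) (V K i)) = _
  rw [RingQuot.liftAlgHom_mkAlgHom_apply]
  simp [Hpsi, V, FreeAlgebra.lift_ι_apply, psiGen]

lemma e_ne : e K m lam 5 ≠ e K m lam 0 := by
  intro h
  have h2 := congrArg (psiA K m lam) h
  rw [psiA_e, psiA_e] at h2
  have h3 := congrFun h2 (0 : Fin 6)
  simp [Pi.single_apply] at h3

end HigherTetrahedral

open HigherTetrahedral Arr in
/-- The assignment on vertices given by `(5 4 2)(1 6 3)` and on arrows by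
`(δ ω σ)(η β ε)(γ ρ ξ)(ν μ α)` extends to a `K`-algebra automorphism `φ` of
`Λ(m,λ)` of order `3`. -/
theorem exists_automorphism_order_three (K : Type) [Field K] (m : ℕ) (hm : 2 ≤ m) (lam : K) :
    ∃ φ : Tet K m lam ≃ₐ[K] Tet K m lam,
      (∀ i : Fin 6, φ (e K m lam i) = e K m lam (vperm i)) ∧
      (∀ θ : Arr, φ (a K m lam θ) = a K m lam (aperm θ)) ∧
      orderOf φ = 3 := by
  haveI : Fact (Nat.Prime 3) := ⟨by norm_num⟩
  have cube := phiA_cube K m lam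
  have h2 : ((phiA K m lam).comp (phiA K m lam)).comp (phiA K m lam)
      = AlgHom.id K (Tet K m lam) := by
    rw [AlgHom.comp_assoc]; exact cube
  set φ : Tet K m lam ≃ₐ[K] Tet K m lam :=
    AlgEquiv.ofAlgHom (phiA K m lam) ((phiA K m lam).comp (phiA K m lam)) cube h2 with hφ
  have hcoe : ∀ x, φ x = phiA K m lam x := fun x => rfl
  refine ⟨φ, fun i => by rw [hcoe]; exact phiA_e K m lam i,
    fun θ => by rw [hcoe]; exact phiA_a K m lam θ, ?_⟩
  have h3 : φ ^ 3 = 1 := by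
    ext x
    have hc := AlgHom.congr_fun cube x
    simp only [AlgHom.coe_comp, Function.comp_apply, AlgHom.id_apply] at hc
    show (φ ^ 3) x = x
    rw [pow_succ, pow_succ, pow_one]
    simp only [AlgEquiv.mul_apply, hcoe]
    exact hc
  have hne : φ ≠ 1 := by
    intro h
    have h0 : φ (e K m lam 0) = e K m lam 0 := by rw [h]; rfl
    rw [hcoe, phiA_e] at h0
    have hv : vperm 0 = 5 := by decide
    rw [hv] at h0
    exact e_ne K m lam h0
  exact orderOf_eq_prime h3 hne
end

section
/- For each t ∈ K \ {0}, the algebra Σ(m,t) is isomorphic to Σ(m,1); explicitly, choosing b_t ∈ K with b_t^8 = t, the map sending ε ↦ t^{−1}ε, η ↦ t^{−1}η, μ ↦ t^{−1}μ, and θ ↦ b_t·θ for θ ∈ {α, β, γ, σ, ω, δ} extends to an algebra isomorphism Σ(m,1) → Σ(m,t). -/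
open scoped TensorProduct

namespace SigmaAlg

/-- The six vertices `a, b, c, x, y, z` of the quiver of `Σ(m,t)`. -/
inductive SV : Type
  | va | vb | vc | vx | vy | vz
  deriving DecidableEq

instance instFintypeSV : Fintype SV :=
  ⟨⟨[SV.va, SV.vb, SV.vc, SV.vx, SV.vy, SV.vz], by decide⟩, fun x => by cases x <;> decide⟩

/-- The nine arrows of the quiver of `Σ(m,t)`:
`α:x→a, δ:a→z, ω:z→c, σ:c→y, γ:y→b, β:b→x` and loops `ε` at `x`, `η` at `y`,
`μ` at `z`. -/
inductive SArr : Type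
  | sa | sd | sw | ss | sg | sb | se | sh | sm
  deriving DecidableEq

instance instFintypeSArr : Fintype SArr :=
  ⟨⟨[SArr.sa, SArr.sd, SArr.sw, SArr.ss, SArr.sg, SArr.sb, SArr.se, SArr.sh, SArr.sm], by decide⟩,
    fun x => by cases x <;> decide⟩

open SV SArr

/-- Source vertex. -/
def ssrc : SArr → SV
  | sa => vx | sd => va | sw => vz | ss => vc | sg => vy | sb => vb
  | se => vx | sh => vy | sm => vz

/-- Target vertex. -/
def stgt : SArr → SV
  | sa => va | sd => vz | sw => vc | ss => vy | sg => vb | sb => vx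
  | se => vx | sh => vy | sm => vz

variable (K : Type) [Field K]

/-- Ambient free algebra of `Σ(m,t)`. -/
abbrev FreeSig := FreeAlgebra K (SV ⊕ SArr)

/-- Vertex generator. -/
def SVgen (i : SV) : FreeSig K := FreeAlgebra.ι K (Sum.inl i)

/-- Arrow generator. -/
def SA (θ : SArr) : FreeSig K := FreeAlgebra.ι K (Sum.inr θ)

/-- Product of a list of arrows (a path read left to right). -/
def SW (l : List SArr) : FreeSig K := (l.map (SA K)).prod

variable (m : ℕ) (t : K)

/-- The defining relations of `Σ(m,t)`. -/
inductive SigRel : FreeSig K → FreeSig K → Prop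
  | idem (i j : SV) : SigRel (SVgen K i * SVgen K j) (if i = j then SVgen K i else 0)
  | sum_one : SigRel (∑ i : SV, SVgen K i) 1
  | src_tgt (θ : SArr) : SigRel (SVgen K (ssrc θ) * SA K θ * SVgen K (stgt θ)) (SA K θ)
  | rel_ba : SigRel (SW K [sb, sa]) 0
  | rel_sg : SigRel (SW K [ss, sg]) 0
  | rel_dw : SigRel (SW K [sd, sw]) 0
  | rel_ee : SigRel (SA K se * SA K se) (t • SA K se)
  | rel_hh : SigRel (SA K sh * SA K sh) (t • SA K sh)
  | rel_mm : SigRel (SA K sm * SA K sm) (t • SA K sm)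
  | rel_e1 : SigRel (t • SW K [sa, sd, sm, sw, ss, sh, sg, sb, se] ^ m)
      (SA K se * SW K [sa, sd, sm, sw, ss, sh, sg, sb, se] ^ m)
  | rel_e2 : SigRel (t • SW K [se, sa, sd, sm, sw, ss, sh, sg, sb] ^ m)
      (SW K [se, sa, sd, sm, sw, ss, sh, sg, sb] ^ m * SA K se)
  | rel_h1 : SigRel (t • SW K [sg, sb, se, sa, sd, sm, sw, ss, sh] ^ m)
      (SA K sh * SW K [sg, sb, se, sa, sd, sm, sw, ss, sh] ^ m)
  | rel_h2 : SigRel (t • SW K [sh, sg, sb, se, sa, sd, sm, sw, ss] ^ m)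
      (SW K [sh, sg, sb, se, sa, sd, sm, sw, ss] ^ m * SA K sh)
  | rel_m1 : SigRel (t • SW K [sw, ss, sh, sg, sb, se, sa, sd, sm] ^ m)
      (SA K sm * SW K [sw, ss, sh, sg, sb, se, sa, sd, sm] ^ m)
  | rel_m2 : SigRel (t • SW K [sm, sw, ss, sh, sg, sb, se, sa, sd] ^ m)
      (SW K [sm, sw, ss, sh, sg, sb, se, sa, sd] ^ m * SA K sm)
  | rel_c1 : SigRel (SW K [sa, sd, sm, sw, ss, sh, sg, sb, se] ^ m)
      (SW K [se, sa, sd, sm, sw, ss, sh, sg, sb] ^ m)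
  | rel_c2 : SigRel (SW K [sg, sb, se, sa, sd, sm, sw, ss, sh] ^ m)
      (SW K [sh, sg, sb, se, sa, sd, sm, sw, ss] ^ m)
  | rel_c3 : SigRel (SW K [sw, ss, sh, sg, sb, se, sa, sd, sm] ^ m)
      (SW K [sm, sw, ss, sh, sg, sb, se, sa, sd] ^ m)
  | rel_z1 : SigRel (SW K [sd, sm, sw, ss, sh, sg, sb, se, sa] ^ m * SA K sd) 0
  | rel_z2 : SigRel (SA K sa * SW K [sd, sm, sw, ss, sh, sg, sb, se, sa] ^ m) 0
  | rel_z3 : SigRel (SW K [sb, se, sa, sd, sm, sw, ss, sh, sg] ^ m * SA K sb) 0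
  | rel_z4 : SigRel (SA K sg * SW K [sb, se, sa, sd, sm, sw, ss, sh, sg] ^ m) 0
  | rel_z5 : SigRel (SW K [ss, sh, sg, sb, se, sa, sd, sm, sw] ^ m * SA K ss) 0
  | rel_z6 : SigRel (SA K sw * SW K [ss, sh, sg, sb, se, sa, sd, sm, sw] ^ m) 0

/-- The algebra `Σ(m,t)`. -/
abbrev Sig := RingQuot (SigRel K m t)

/-- Vertex idempotent of `Σ(m,t)`. -/
def sf (i : SV) : Sig K m t := RingQuot.mkAlgHom K (SigRel K m t) (SVgen K i)

/-- Arrow of `Σ(m,t)`. -/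
def sarr (θ : SArr) : Sig K m t := RingQuot.mkAlgHom K (SigRel K m t) (SA K θ)

section Aux

open SV SArr

variable (K : Type) [Field K] (m : ℕ)

/-- Scaling coefficient: loops get `u`, other arrows get `v`. -/
def cf (u v : K) : SArr → K
  | se => u | sh => u | sm => u
  | sa => v | sd => v | sw => v | ss => v | sg => v | sb => v

/-- The scaling map from the free algebra to `Σ(m,t₂)`. -/
noncomputable def gm (u v t₂ : K) : FreeSig K →ₐ[K] Sig K m t₂ :=
  FreeAlgebra.lift K
    (Sum.elim (sf K m t₂) (fun θ => cf K u v θ • sarr K m t₂ θ))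

@[simp] lemma gm_SVgen (u v t₂ : K) (i : SV) :
    gm K m u v t₂ (SVgen K i) = sf K m t₂ i := by
  simp [gm, SVgen]

@[simp] lemma gm_SA (u v t₂ : K) (θ : SArr) :
    gm K m u v t₂ (SA K θ) = cf K u v θ • sarr K m t₂ θ := by
  simp [gm, SA]

lemma SW_cons (θ : SArr) (l : List SArr) : SW K (θ :: l) = SA K θ * SW K l := by
  simp [SW]

@[simp] lemma SW_nil : SW K ([] : List SArr) = 1 := by simp [SW]

lemma gm_SW (u v t₂ : K) (l : List SArr) :
    gm K m u v t₂ (SW K l) = (l.map (cf K u v)).prod •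
      RingQuot.mkAlgHom K (SigRel K m t₂) (SW K l) := by
  induction l with
  | nil => simp
  | cons θ l ih =>
      rw [SW_cons, map_mul, map_mul, ih, gm_SA, smul_mul_smul_comm, List.map_cons,
        List.prod_cons]
      rfl

lemma gm_SW_pow (u v t₂ : K) (l : List SArr) (n : ℕ) :
    gm K m u v t₂ (SW K l ^ n) = ((l.map (cf K u v)).prod) ^ n •
      RingQuot.mkAlgHom K (SigRel K m t₂) (SW K l ^ n) := by
  rw [map_pow, gm_SW, smul_pow, map_pow]

/-- The scaling map respects the relations, provided `t₁ = u * t₂`. -/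
lemma gm_rel (u v t₁ t₂ : K) (h : t₁ = u * t₂) :
    ∀ ⦃x y⦄, SigRel K m t₁ x y → gm K m u v t₂ x = gm K m u v t₂ y := by
  subst h
  have Qrel : ∀ {a b : FreeSig K}, SigRel K m t₂ a b →
      RingQuot.mkAlgHom K (SigRel K m t₂) a = RingQuot.mkAlgHom K (SigRel K m t₂) b :=
    fun hr => RingQuot.mkAlgHom_rel K hr
  intro x y r
  induction r with
  | idem i j =>
      have h2 := Qrel (SigRel.idem i j)
      rw [map_mul] at h2
      split_ifs with hij <;>
        simp_all [map_mul, sf]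
  | sum_one =>
      have h2 := Qrel (SigRel.sum_one)
      rw [map_sum] at h2
      simp only [map_sum, gm_SVgen, map_one] at *
      simpa [sf] using h2
  | src_tgt θ =>
      have h2 := Qrel (SigRel.src_tgt θ)
      rw [map_mul, map_mul] at h2
      simp only [map_mul, gm_SVgen, gm_SA, mul_smul_comm, smul_mul_assoc]
      rw [show (sf K m t₂ (ssrc θ) * sarr K m t₂ θ * sf K m t₂ (stgt θ)) = sarr K m t₂ θ
        from h2]
  | rel_ba =>
      have h2 := Qrel (SigRel.rel_ba)
      rw [gm_SW, h2, map_zero, smul_zero, map_zero]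
  | rel_sg =>
      have h2 := Qrel (SigRel.rel_sg)
      rw [gm_SW, h2, map_zero, smul_zero, map_zero]
  | rel_dw =>
      have h2 := Qrel (SigRel.rel_dw)
      rw [gm_SW, h2, map_zero, smul_zero, map_zero]
  | rel_ee =>
      have h2 := Qrel (SigRel.rel_ee)
      rw [map_smul, map_mul, gm_SA, smul_mul_smul_comm]
      simp only [sarr]
      rw [← map_mul, h2, map_smul]
      simp only [smul_smul]
      congr 1
      simp only [cf]; ring
  | rel_hh =>
      have h2 := Qrel (SigRel.rel_hh)
      rw [map_smul, map_mul, gm_SA, smul_mul_smul_comm]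
      simp only [sarr]
      rw [← map_mul, h2, map_smul]
      simp only [smul_smul]
      congr 1
      simp only [cf]; ring
  | rel_mm =>
      have h2 := Qrel (SigRel.rel_mm)
      rw [map_smul, map_mul, gm_SA, smul_mul_smul_comm]
      simp only [sarr]
      rw [← map_mul, h2, map_smul]
      simp only [smul_smul]
      congr 1
      simp only [cf]; ring
  | rel_e1 =>
      have h2 := (Qrel (SigRel.rel_e1)).symm
      rw [map_smul] at h2
      rw [map_smul, map_mul, gm_SA, gm_SW_pow, smul_mul_smul_comm]
      simp only [sarr]
      rw [← map_mul, h2]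
      simp only [smul_smul]
      congr 1
      simp only [cf]; ring
  | rel_e2 =>
      have h2 := (Qrel (SigRel.rel_e2)).symm
      rw [map_smul] at h2
      rw [map_smul, map_mul, gm_SA, gm_SW_pow, smul_mul_smul_comm]
      simp only [sarr]
      rw [← map_mul, h2]
      simp only [smul_smul]
      congr 1
      simp only [cf]; ring
  | rel_h1 =>
      have h2 := (Qrel (SigRel.rel_h1)).symm
      rw [map_smul] at h2
      rw [map_smul, map_mul, gm_SA, gm_SW_pow, smul_mul_smul_comm]
      simp only [sarr]
      rw [← map_mul, h2]
      simp only [smul_smul]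
      congr 1
      simp only [cf]; ring
  | rel_h2 =>
      have h2 := (Qrel (SigRel.rel_h2)).symm
      rw [map_smul] at h2
      rw [map_smul, map_mul, gm_SA, gm_SW_pow, smul_mul_smul_comm]
      simp only [sarr]
      rw [← map_mul, h2]
      simp only [smul_smul]
      congr 1
      simp only [cf]; ring
  | rel_m1 =>
      have h2 := (Qrel (SigRel.rel_m1)).symm
      rw [map_smul] at h2
      rw [map_smul, map_mul, gm_SA, gm_SW_pow, smul_mul_smul_comm]
      simp only [sarr]
      rw [← map_mul, h2]
      simp only [smul_smul]
      congr 1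
      simp only [cf]; ring
  | rel_m2 =>
      have h2 := (Qrel (SigRel.rel_m2)).symm
      rw [map_smul] at h2
      rw [map_smul, map_mul, gm_SA, gm_SW_pow, smul_mul_smul_comm]
      simp only [sarr]
      rw [← map_mul, h2]
      simp only [smul_smul]
      congr 1
      simp only [cf]; ring
  | rel_c1 =>
      have h2 := Qrel (SigRel.rel_c1)
      rw [gm_SW_pow, gm_SW_pow, h2]
      congr 2
      simp [cf]; ring
  | rel_c2 =>
      have h2 := Qrel (SigRel.rel_c2)
      rw [gm_SW_pow, gm_SW_pow, h2]
      congr 2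
      simp [cf]; ring
  | rel_c3 =>
      have h2 := Qrel (SigRel.rel_c3)
      rw [gm_SW_pow, gm_SW_pow, h2]
      congr 2
      simp [cf]; ring
  | rel_z1 =>
      have h2 := Qrel (SigRel.rel_z1)
      rw [map_zero] at h2
      rw [map_mul, map_zero, gm_SA, gm_SW_pow, smul_mul_smul_comm]
      simp only [sarr]
      rw [← map_mul, h2, smul_zero]
  | rel_z2 =>
      have h2 := Qrel (SigRel.rel_z2)
      rw [map_zero] at h2
      rw [map_mul, map_zero, gm_SA, gm_SW_pow, smul_mul_smul_comm]
      simp only [sarr]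
      rw [← map_mul, h2, smul_zero]
  | rel_z3 =>
      have h2 := Qrel (SigRel.rel_z3)
      rw [map_zero] at h2
      rw [map_mul, map_zero, gm_SA, gm_SW_pow, smul_mul_smul_comm]
      simp only [sarr]
      rw [← map_mul, h2, smul_zero]
  | rel_z4 =>
      have h2 := Qrel (SigRel.rel_z4)
      rw [map_zero] at h2
      rw [map_mul, map_zero, gm_SA, gm_SW_pow, smul_mul_smul_comm]
      simp only [sarr]
      rw [← map_mul, h2, smul_zero]
  | rel_z5 =>
      have h2 := Qrel (SigRel.rel_z5)
      rw [map_zero] at h2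
      rw [map_mul, map_zero, gm_SA, gm_SW_pow, smul_mul_smul_comm]
      simp only [sarr]
      rw [← map_mul, h2, smul_zero]
  | rel_z6 =>
      have h2 := Qrel (SigRel.rel_z6)
      rw [map_zero] at h2
      rw [map_mul, map_zero, gm_SA, gm_SW_pow, smul_mul_smul_comm]
      simp only [sarr]
      rw [← map_mul, h2, smul_zero]

/-- The induced map `Σ(m,t₁) → Σ(m,t₂)`. -/
noncomputable def phi (u v t₁ t₂ : K) (h : t₁ = u * t₂) : Sig K m t₁ →ₐ[K] Sig K m t₂ :=
  RingQuot.liftAlgHom K ⟨gm K m u v t₂, gm_rel K m u v t₁ t₂ h⟩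

@[simp] lemma phi_sf (u v t₁ t₂ : K) (h : t₁ = u * t₂) (i : SV) :
    phi K m u v t₁ t₂ h (sf K m t₁ i) = sf K m t₂ i := by
  rw [phi, sf, RingQuot.liftAlgHom_mkAlgHom_apply, gm_SVgen]

@[simp] lemma phi_sarr (u v t₁ t₂ : K) (h : t₁ = u * t₂) (θ : SArr) :
    phi K m u v t₁ t₂ h (sarr K m t₁ θ) = cf K u v θ • sarr K m t₂ θ := by
  rw [phi, sarr, RingQuot.liftAlgHom_mkAlgHom_apply, gm_SA]

end Aux

end SigmaAlg

open SigmaAlg SV SArr in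
/-- For `t ≠ 0`, `Σ(m,t) ≅ Σ(m,1)`: choosing `b_t` with `b_t⁸ = t`, the map sending
`ε ↦ t⁻¹ε`, `η ↦ t⁻¹η`, `μ ↦ t⁻¹μ` and `θ ↦ b_t·θ` for the six other arrows
(fixing the vertex idempotents) extends to an algebra isomorphism
`Σ(m,1) → Σ(m,t)`. -/
theorem sigma_iso (K : Type) [Field K] (m : ℕ) (hm : 2 ≤ m) (t : K) (ht : t ≠ 0)
    (bt : K) (hbt : bt ^ 8 = t) :
    ∃ φ : Sig K m 1 ≃ₐ[K] Sig K m t,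
      (∀ i : SV, φ (sf K m 1 i) = sf K m t i) ∧
      φ (sarr K m 1 se) = t⁻¹ • sarr K m t se ∧
      φ (sarr K m 1 sh) = t⁻¹ • sarr K m t sh ∧
      φ (sarr K m 1 sm) = t⁻¹ • sarr K m t sm ∧
      φ (sarr K m 1 sa) = bt • sarr K m t sa ∧
      φ (sarr K m 1 sb) = bt • sarr K m t sb ∧
      φ (sarr K m 1 sg) = bt • sarr K m t sg ∧
      φ (sarr K m 1 ss) = bt • sarr K m t ss ∧
      φ (sarr K m 1 sw) = bt • sarr K m t sw ∧
      φ (sarr K m 1 sd) = bt • sarr K m t sd := by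
  have hbt0 : bt ≠ 0 := by
    intro h0
    rw [h0] at hbt
    simp at hbt
    exact ht hbt.symm
  have h1 : (1 : K) = t⁻¹ * t := (inv_mul_cancel₀ ht).symm
  have h2 : t = t * 1 := (mul_one t).symm
  set φ₀ := phi K m t⁻¹ bt 1 t h1 with hφ₀
  set ψ₀ := phi K m t (bt⁻¹) t 1 h2 with hψ₀
  have comp1 : φ₀.comp ψ₀ = AlgHom.id K (Sig K m t) := by
    apply RingQuot.ringQuot_ext'
    apply FreeAlgebra.hom_ext
    funext g
    rcases g with i | θ
    · show φ₀ (ψ₀ (sf K m t i)) = sf K m t i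
      rw [hψ₀, hφ₀, phi_sf, phi_sf]
    · show φ₀ (ψ₀ (sarr K m t θ)) = sarr K m t θ
      rw [hψ₀, hφ₀, phi_sarr, map_smul, phi_sarr, smul_smul]
      cases θ <;>
        simp [cf, inv_mul_cancel₀ ht, mul_inv_cancel₀ ht,
          inv_mul_cancel₀ hbt0, mul_inv_cancel₀ hbt0]
  have comp2 : ψ₀.comp φ₀ = AlgHom.id K (Sig K m 1) := by
    apply RingQuot.ringQuot_ext'
    apply FreeAlgebra.hom_ext
    funext g
    rcases g with i | θ
    · show ψ₀ (φ₀ (sf K m 1 i)) = sf K m 1 i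
      rw [hφ₀, hψ₀, phi_sf, phi_sf]
    · show ψ₀ (φ₀ (sarr K m 1 θ)) = sarr K m 1 θ
      rw [hφ₀, hψ₀, phi_sarr, map_smul, phi_sarr, smul_smul]
      cases θ <;>
        simp [cf, inv_mul_cancel₀ ht, mul_inv_cancel₀ ht,
          inv_mul_cancel₀ hbt0, mul_inv_cancel₀ hbt0]
  refine ⟨AlgEquiv.ofAlgHom φ₀ ψ₀ comp1 comp2, ?_, ?_, ?_, ?_, ?_, ?_, ?_, ?_, ?_, ?_⟩ <;>
    first
      | (intro i; exact phi_sf K m t⁻¹ bt 1 t h1 i)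
      | (refine (phi_sarr K m t⁻¹ bt 1 t h1 _).trans ?_; rfl)
end
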